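/- Let H be an m-hypergraph of size n and {i_1,...,i_q} a subset of vertex indices with q ≥ m. Then the ideal (x_{i_1},...,x_{i_q}) ⊆ K[x_1,...,x_n] is an associated prime of (I(H)^∨)^2 if and only if (x_{i_1},...,x_{i_q}) ⊆ K[x_{i_1},...,x_{i_q}] is an associated prime of (I(H')^∨)^2, where H' is the induced subhypergraph of H on {x_{i_1},...,x_{i_q}}. -/

import Mathlib

open MvPolynomial Finset

noncomputable section

/-- A `k`-cover of a hypergraph with edge set `E`: a nonzero tuple whose entries
sum to at least `k` over every edge. -/
def IsCover {V : Type*} (E : Finset (Finset V)) (k : ℕ) (a : V → ℕ) : Prop :=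
  a ≠ 0 ∧ ∀ e ∈ E, k ≤ ∑ i ∈ e, a i

/-- `a` is a sum of two 1-covers. -/
def SumTwoOneCovers {V : Type*} (E : Finset (Finset V)) (a : V → ℕ) : Prop :=
  ∃ b c : V → ℕ, IsCover E 1 b ∧ IsCover E 1 c ∧ a = b + c

/-- An independent set: no edge is contained in `S`. -/
def IsIndep {V : Type*} (E : Finset (Finset V)) (S : Finset V) : Prop :=
  ∀ e ∈ E, ¬ e ⊆ S

/-- `i` is in the neighborhood of `S`: `i ∉ S` and some edge consists of `i`
together with vertices of `S`. -/
def InNbhd {V : Type*} (E : Finset (Finset V)) (S : Finset V) (i : V) : Prop :=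
  i ∉ S ∧ ∃ e ∈ E, i ∈ e ∧ ∀ j ∈ e, j ≠ i → j ∈ S

open Classical in
/-- The 2-cover `A_S` attached to an independent set `S`:
`0` on `S`, `2` on `N(S)`, and `1` elsewhere. -/
noncomputable def indepCover {V : Type*} (E : Finset (Finset V)) (S : Finset V) : V → ℕ :=
  fun i => if i ∈ S then 0 else if InNbhd E S i then 2 else 1

/-- The Alexander dual of the edge ideal: `⋂_{edges e} (x_i : i ∈ e)`. -/
noncomputable def dualIdeal {V : Type*} (K : Type*) [Field K] (E : Finset (Finset V)) :
    Ideal (MvPolynomial V K) :=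
  ⨅ e ∈ E, Ideal.span (X '' (e : Set V))

/-- The monomial `x_1^{a_1} ⋯ x_n^{a_n}` attached to a tuple `a`. -/
noncomputable def coverMonomial {V : Type*} [Fintype V] (K : Type*) [Field K] (a : V → ℕ) :
    MvPolynomial V K :=
  ∏ i, X i ^ a i

/-- Connectedness of a hypergraph: any two vertices are linked by a chain of
vertices in which consecutive vertices share an edge. -/
def HConnected {V : Type*} (E : Finset (Finset V)) : Prop :=
  ∀ x y : V, ∃ l : List V, l.head? = some x ∧ l.getLast? = some y ∧
    l.Chain' fun a b => ∃ e ∈ E, a ∈ e ∧ b ∈ e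

/-- The cyclic 3-hypergraph with edges `{x_1,x_2,x_3}, {x_3,x_4,x_5}, …`
(0-based: `{2j, 2j+1, 2j+2}` modulo `n`). -/
def cyc3 (n : ℕ) (hn : 0 < n) : Finset (Finset (Fin n)) :=
  (Finset.range ((n + 1) / 2)).image fun j =>
    ({⟨(2 * j) % n, Nat.mod_lt _ hn⟩, ⟨(2 * j + 1) % n, Nat.mod_lt _ hn⟩,
      ⟨(2 * j + 2) % n, Nat.mod_lt _ hn⟩} : Finset (Fin n))

/-- The alternating tuple: `1` on odd vertices `x_1, x_3, …` (0-based even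
indices), `0` on even vertices. -/
def altCover (n : ℕ) : Fin n → ℕ :=
  fun i => if (i : ℕ) % 2 = 0 then 1 else 0

section Helpers
variable {R : Type*} [CommRing R] {R' : Type*} [CommRing R']

lemma assocPrime_quot_iff [IsNoetherianRing R] (P J : Ideal R) :
    IsAssociatedPrime P (R ⧸ J) ↔ P.IsPrime ∧ ∃ f : R, ∀ r, r ∈ P ↔ r * f ∈ J := by
  rw [isAssociatedPrime_iff]
  have key : ∀ (f r : R),
      (r ∈ (⊥ : Submodule R (R ⧸ J)).colon {(Ideal.Quotient.mk J f : R ⧸ J)} ↔ r * f ∈ J) := by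
    intro f r
    rw [Submodule.mem_colon_singleton, Submodule.mem_bot]
    constructor
    · intro h
      rwa [← Ideal.Quotient.mk_eq_mk, ← Submodule.Quotient.mk_smul,
        Submodule.Quotient.mk_eq_zero, smul_eq_mul] at h
    · intro h
      rw [← Ideal.Quotient.mk_eq_mk, ← Submodule.Quotient.mk_smul,
        Submodule.Quotient.mk_eq_zero, smul_eq_mul]
      exact h
  constructor
  · rintro ⟨hP, x, hx⟩
    obtain ⟨f, rfl⟩ := Ideal.Quotient.mk_surjective x
    exact ⟨hP, f, fun r => hx ▸ key f r⟩
  · rintro ⟨hP, f, hf⟩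
    refine ⟨hP, Ideal.Quotient.mk J f, ?_⟩
    ext r
    rw [key f r]
    exact hf r

lemma colon_transfer (P I2 J2 : Ideal R) (hP : P.IsPrime) (w : R) (hw : w ∉ P)
    (hJI : J2 ≤ I2) (h2 : ∀ x ∈ I2, x * w ∈ J2) :
    (∃ f, ∀ r, r ∈ P ↔ r * f ∈ J2) ↔ ∃ f, ∀ r, r ∈ P ↔ r * f ∈ I2 := by
  constructor
  · rintro ⟨f, hf⟩
    refine ⟨f, fun r => ⟨fun hr => hJI ((hf r).mp hr), fun hr => ?_⟩⟩
    have h3 : (r * w) * f ∈ J2 := by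
      have h4 := h2 _ hr
      rwa [show r * f * w = r * w * f by ring] at h4
    exact (hP.mem_or_mem ((hf (r * w)).mpr h3)).resolve_right hw
  · rintro ⟨f, hf⟩
    refine ⟨f * w, fun r => ⟨fun hr => ?_, fun hr => ?_⟩⟩
    · rw [← mul_assoc]
      exact h2 _ ((hf r).mp hr)
    · have h3 : (r * w) * f ∈ I2 := by
        have h4 := hJI hr
        rwa [show r * (f * w) = r * w * f by ring] at h4
      exact (hP.mem_or_mem ((hf (r * w)).mpr h3)).resolve_right hw

lemma colon_equiv_transfer (e : R ≃+* R') (P J : Ideal R) :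
    (∃ f, ∀ r, r ∈ P ↔ r * f ∈ J) ↔
      ∃ f', ∀ r', r' ∈ Ideal.map e P ↔ r' * f' ∈ Ideal.map e J := by
  constructor
  · rintro ⟨f, hf⟩
    refine ⟨e f, fun r' => ?_⟩
    rw [← e.apply_symm_apply r', ← map_mul, Ideal.apply_mem_of_equiv_iff,
      Ideal.apply_mem_of_equiv_iff]
    exact hf _
  · rintro ⟨f', hf'⟩
    refine ⟨e.symm f', fun r => ?_⟩
    have h := hf' (e r)
    rwa [Ideal.apply_mem_of_equiv_iff, ← e.apply_symm_apply f', ← map_mul,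
      Ideal.apply_mem_of_equiv_iff] at h

lemma map_equiv_iInf (e : R ≃+* R') {ι : Sort*} (F : ι → Ideal R) :
    Ideal.map e (⨅ i, F i) = ⨅ i, Ideal.map e (F i) := by
  ext x
  simp only [← Ideal.comap_symm, Ideal.mem_comap, Submodule.mem_iInf]

lemma mapC_iInf {σ : Type*} {ι : Sort*} (F : ι → Ideal R) :
    Ideal.map (C : R →+* MvPolynomial σ R) (⨅ i, F i) = ⨅ i, Ideal.map C (F i) := by
  ext f
  simp only [mem_map_C_iff, Submodule.mem_iInf]
  exact forall_comm

lemma exists_colon_mapC_iff {σ : Type*} (P' J'' : Ideal R) (hP : P'.IsPrime) :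
    (∃ F : MvPolynomial σ R, ∀ r, r ∈ Ideal.map (C : R →+* MvPolynomial σ R) P' ↔
        r * F ∈ Ideal.map (C : R →+* MvPolynomial σ R) J'') ↔
      ∃ g : R, ∀ a, a ∈ P' ↔ a * g ∈ J'' := by
  classical
  constructor
  · rintro ⟨F, hF⟩
    have key : ∀ a : R, a ∈ P' ↔ ∀ m, a * F.coeff m ∈ J'' := by
      intro a
      have h1 : a ∈ P' ↔ C a ∈ Ideal.map (C : R →+* MvPolynomial σ R) P' := by
        rw [mem_map_C_iff]
        constructor
        · intro h m
          rw [coeff_C]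
          split <;> simp [h]
        · intro h
          simpa using h 0
      rw [h1, hF, mem_map_C_iff]
      constructor
      · intro h m
        simpa [coeff_C_mul] using h m
      · intro h m
        simpa [coeff_C_mul] using h m
    have hinf : F.support.inf (fun m => Submodule.colon J'' (Ideal.span {F.coeff m})) ≤ P' := by
      intro a ha
      rw [key]
      intro m
      by_cases hm : m ∈ F.support
      · exact Ideal.mem_colon_span_singleton.mp
          (Finset.inf_le (f := fun m => Submodule.colon J'' (Ideal.span {F.coeff m})) hm ha)
      · rw [notMem_support_iff.mp hm, mul_zero]
        exact J''.zero_mem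
    obtain ⟨m, _, hle⟩ := hP.inf_le'.mp hinf
    exact ⟨F.coeff m, fun a =>
      ⟨fun ha => (key a).mp ha m, fun h => hle (Ideal.mem_colon_span_singleton.mpr h)⟩⟩
  · rintro ⟨g, hg⟩
    refine ⟨C g, fun r => ?_⟩
    rw [mem_map_C_iff, mem_map_C_iff]
    refine forall_congr' fun m => ?_
    rw [mul_comm r (C g), coeff_C_mul, mul_comm]
    exact hg _

end Helpers

lemma span_range_X_eq_ker {σ K : Type*} [CommRing K] :
    Ideal.span (Set.range (X : σ → MvPolynomial σ K)) =
      RingHom.ker (constantCoeff : MvPolynomial σ K →+* K) := by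
  classical
  apply le_antisymm
  · rw [Ideal.span_le]
    rintro _ ⟨i, rfl⟩
    simp [RingHom.mem_ker]
  · intro f hf
    rw [RingHom.mem_ker] at hf
    rw [as_sum f]
    refine Ideal.sum_mem _ fun m hm => ?_
    by_cases h0 : m = 0
    · subst h0
      rw [show coeff 0 f = constantCoeff f from rfl, hf]
      simp
    · obtain ⟨i, hi⟩ : ∃ i, m i ≠ 0 := by
        by_contra hc
        push_neg at hc
        exact h0 (Finsupp.ext fun i => hc i)
      have hle : Finsupp.single i 1 ≤ m := by
        rw [Finsupp.single_le_iff]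
        exact Nat.one_le_iff_ne_zero.mpr hi
      have hmono : monomial m (coeff m f) =
          monomial (m - Finsupp.single i 1) (coeff m f) * X i := by
        rw [X, monomial_mul, mul_one, tsub_add_cancel_of_le hle]
      rw [hmono]
      exact Ideal.mul_mem_left _ _ (Ideal.subset_span ⟨i, rfl⟩)

lemma span_range_X_isPrime {σ K : Type*} [Field K] :
    (Ideal.span (Set.range (X : σ → MvPolynomial σ K))).IsPrime := by
  rw [span_range_X_eq_ker]
  exact RingHom.ker_isPrime _

lemma mapC_isPrime {σ A : Type*} [CommRing A] (P : Ideal A) (hP : P.IsPrime) :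
    (Ideal.map (C : A →+* MvPolynomial σ A) P).IsPrime := by
  rw [← Ideal.Quotient.isDomain_iff_prime]
  haveI : IsDomain (A ⧸ P) := (Ideal.Quotient.isDomain_iff_prime P).mpr hP
  exact MulEquiv.isDomain (MvPolynomial σ (A ⧸ P))
    (quotientEquivQuotientMvPolynomial P (σ := σ)).symm.toRingEquiv.toMulEquiv

noncomputable def phiEquiv (K : Type*) [Field K] {n : ℕ} (S : Finset (Fin n)) :
    MvPolynomial (Fin n) K ≃+*
      MvPolynomial {i : Fin n // ¬ i ∈ S} (MvPolynomial {i : Fin n // i ∈ S} K) :=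
  ((renameEquiv K (((Equiv.sumCompl (fun i : Fin n => i ∈ S)).symm).trans
      (Equiv.sumComm _ _))).trans
    (sumAlgEquiv K _ _)).toRingEquiv

lemma phiEquiv_X_mem {K : Type*} [Field K] {n : ℕ} (S : Finset (Fin n)) (i : Fin n)
    (h : i ∈ S) : phiEquiv K S (X i) = C (X ⟨i, h⟩) := by
  simp [phiEquiv, Equiv.sumCompl_symm_apply_of_pos h]

theorem stmt9 {K : Type*} [Field K] {n m : ℕ} (E : Finset (Finset (Fin n)))
    (hm : ∀ e ∈ E, e.card = m) (S : Finset (Fin n)) (hq : m ≤ S.card) :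
    IsAssociatedPrime (Ideal.span (X '' (S : Set (Fin n))) : Ideal (MvPolynomial (Fin n) K))
        (MvPolynomial (Fin n) K ⧸ ((dualIdeal K E) ^ 2)) ↔
      IsAssociatedPrime
        (Ideal.span (Set.range X) : Ideal (MvPolynomial {i : Fin n // i ∈ S} K))
        (MvPolynomial {i : Fin n // i ∈ S} K ⧸
          ((dualIdeal K ((E.filter (fun e => e ⊆ S)).image
              (fun e => e.subtype (fun i => i ∈ S)))) ^ 2)) := by
  classical
  rw [assocPrime_quot_iff, assocPrime_quot_iff]
  set Φ := phiEquiv K S with hΦ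
  set I : Ideal (MvPolynomial (Fin n) K) :=
    ⨅ e ∈ E.filter (fun e => e ⊆ S), Ideal.span (X '' (e : Set (Fin n))) with hI
  set w : MvPolynomial (Fin n) K := ∏ j ∈ Sᶜ, X j with hwdef
  have hP' : (Ideal.span (Set.range X) :
      Ideal (MvPolynomial {i : Fin n // i ∈ S} K)).IsPrime := span_range_X_isPrime
  -- the image of the monomial prime under Φ
  have hmapP : Ideal.map Φ (Ideal.span (X '' (S : Set (Fin n)))) =
      Ideal.map C (Ideal.span (Set.range X) :
        Ideal (MvPolynomial {i : Fin n // i ∈ S} K)) := by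
    rw [Ideal.map_span, Ideal.map_span]
    congr 1
    ext p
    constructor
    · rintro ⟨_, ⟨i, hi, rfl⟩, rfl⟩
      exact ⟨X ⟨i, hi⟩, ⟨⟨i, hi⟩, rfl⟩, (phiEquiv_X_mem S i hi).symm⟩
    · rintro ⟨_, ⟨⟨i, hi⟩, rfl⟩, rfl⟩
      exact ⟨X i, ⟨i, hi, rfl⟩, phiEquiv_X_mem S i hi⟩
  -- the image of each restricted edge ideal under Φ
  have hedge : ∀ e ∈ E.filter (fun e => e ⊆ S),
      Ideal.map Φ (Ideal.span (X '' (e : Set (Fin n)))) =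
        Ideal.map C (Ideal.span (X '' (((e.subtype (fun i => i ∈ S)) :
          Finset {i : Fin n // i ∈ S}) : Set {i : Fin n // i ∈ S}))) := by
    intro e he
    have heS : e ⊆ S := (Finset.mem_filter.mp he).2
    rw [Ideal.map_span, Ideal.map_span]
    congr 1
    ext p
    constructor
    · rintro ⟨_, ⟨i, hi, rfl⟩, rfl⟩
      have hiS : i ∈ S := heS hi
      exact ⟨X ⟨i, hiS⟩, ⟨⟨i, hiS⟩, Finset.mem_coe.mpr (Finset.mem_subtype.mpr hi), rfl⟩,
        (phiEquiv_X_mem S i hiS).symm⟩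
    · rintro ⟨_, ⟨⟨i, hiS⟩, hie, rfl⟩, rfl⟩
      exact ⟨X i, ⟨i, Finset.mem_subtype.mp hie, rfl⟩, phiEquiv_X_mem S i hiS⟩
  have hmapI : Ideal.map Φ I =
      Ideal.map C (dualIdeal K ((E.filter (fun e => e ⊆ S)).image
        (fun e => e.subtype (fun i => i ∈ S)))) := by
    have hre : dualIdeal K ((E.filter (fun e => e ⊆ S)).image
        (fun e => e.subtype (fun i => i ∈ S))) =
        ⨅ e ∈ E.filter (fun e => e ⊆ S),
          Ideal.span (X '' (((e.subtype (fun i => i ∈ S)) :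
            Finset {i : Fin n // i ∈ S}) : Set {i : Fin n // i ∈ S})) := by
      ext x
      simp only [dualIdeal, Submodule.mem_iInf]
      constructor
      · intro h e he
        exact h _ (Finset.mem_image.mpr ⟨e, he, rfl⟩)
      · intro h e' he'
        obtain ⟨e, he, rfl⟩ := Finset.mem_image.mp he'
        exact h e he
    rw [hI, map_equiv_iInf, hre, mapC_iInf]
    refine iInf_congr fun e => ?_
    rw [map_equiv_iInf, mapC_iInf]
    exact iInf_congr fun he => hedge e he
  -- primality of the big prime
  have hPb : (Ideal.span (X '' (S : Set (Fin n))) :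
      Ideal (MvPolynomial (Fin n) K)).IsPrime := by
    have hcomap : (Ideal.span (X '' (S : Set (Fin n))) :
        Ideal (MvPolynomial (Fin n) K)) =
        Ideal.comap Φ (Ideal.map C (Ideal.span (Set.range X) :
          Ideal (MvPolynomial {i : Fin n // i ∈ S} K))) := by
      ext x
      rw [Ideal.mem_comap, ← hmapP, Ideal.apply_mem_of_equiv_iff]
    rw [hcomap]
    exact (mapC_isPrime _ hP').comap _
  rw [and_iff_right hPb, and_iff_right hP']
  -- comparison of the two monomial ideals
  have hJle : dualIdeal K E ≤ I := by
    rw [hI]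
    refine le_iInf fun e => le_iInf fun he => ?_
    exact iInf_le_of_le e (iInf_le_of_le (Finset.mem_filter.mp he).1 le_rfl)
  have hwQ : ∀ e ∈ E, ¬ e ⊆ S → w ∈ Ideal.span (X '' (e : Set (Fin n))) := by
    intro e _ hns
    obtain ⟨j, hje, hjS⟩ := Finset.not_subset.mp hns
    rw [hwdef, ← Finset.mul_prod_erase _ _ (Finset.mem_compl.mpr hjS)]
    exact Ideal.mul_mem_right _ _ (Ideal.subset_span ⟨j, hje, rfl⟩)
  have hIw : ∀ x ∈ I, x * w ∈ dualIdeal K E := by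
    intro x hx
    rw [hI] at hx
    have hx' : ∀ e ∈ E.filter (fun e => e ⊆ S),
        x ∈ Ideal.span (X '' (e : Set (Fin n))) := by
      intro e he
      exact (Submodule.mem_iInf _).mp ((Submodule.mem_iInf _).mp hx e) he
    show x * w ∈ ⨅ e ∈ E, Ideal.span (X '' (e : Set (Fin n)))
    refine (Submodule.mem_iInf _).mpr fun e => (Submodule.mem_iInf _).mpr fun he => ?_
    by_cases hes : e ⊆ S
    · exact Ideal.mul_mem_right _ _ (hx' e (Finset.mem_filter.mpr ⟨he, hes⟩))
    · exact Ideal.mul_mem_left _ _ (hwQ e he hes)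
  have hJI2 : (dualIdeal K E) ^ 2 ≤ I ^ 2 := by
    rw [pow_two, pow_two]
    exact Ideal.mul_mono hJle hJle
  have hstep : I * Ideal.span {w} ≤ dualIdeal K E := by
    rw [Ideal.mul_le]
    intro r hr s hs
    obtain ⟨c, rfl⟩ := Ideal.mem_span_singleton.mp hs
    rw [show r * (w * c) = r * w * c by ring]
    exact Ideal.mul_mem_right _ _ (hIw r hr)
  have h2 : ∀ x ∈ I ^ 2, x * w ^ 2 ∈ (dualIdeal K E) ^ 2 := by
    intro x hx
    have hsq : I ^ 2 * Ideal.span {w ^ 2} ≤ (dualIdeal K E) ^ 2 := by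
      rw [← Ideal.span_singleton_pow, ← mul_pow, pow_two, pow_two]
      exact Ideal.mul_mono hstep hstep
    exact hsq (Ideal.mul_mem_mul hx (Ideal.subset_span rfl))
  have hwP : w ^ 2 ∉ (Ideal.span (X '' (S : Set (Fin n))) :
      Ideal (MvPolynomial (Fin n) K)) := by
    intro hc
    have hker : (Ideal.span (X '' (S : Set (Fin n))) :
        Ideal (MvPolynomial (Fin n) K)) ≤
        RingHom.ker ((aeval (R := K) (fun i : Fin n => if i ∈ S then (0:K) else 1)).toRingHom) := by
      rw [Ideal.span_le]
      rintro _ ⟨i, hi, rfl⟩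
      simp only [SetLike.mem_coe, RingHom.mem_ker, AlgHom.toRingHom_eq_coe,
        RingHom.coe_coe, aeval_X]
      rw [if_pos (Finset.mem_coe.mp hi)]
    have hzero := hker hc
    rw [RingHom.mem_ker] at hzero
    have hone : (aeval (R := K) (fun i : Fin n => if i ∈ S then (0:K) else 1)).toRingHom (w ^ 2) = 1 := by
      rw [map_pow, hwdef, map_prod]
      have : ∀ j ∈ Sᶜ, (aeval (R := K) (fun i : Fin n => if i ∈ S then (0:K) else 1)).toRingHom (X j)
          = 1 := by
        intro j hj
        simp only [AlgHom.toRingHom_eq_coe, RingHom.coe_coe, aeval_X]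
        rw [if_neg (Finset.mem_compl.mp hj)]
      rw [Finset.prod_congr rfl this]
      simp
    rw [hzero] at hone
    exact zero_ne_one hone
  rw [colon_transfer _ (I ^ 2) _ hPb (w ^ 2) hwP hJI2 h2,
    colon_equiv_transfer Φ _ (I ^ 2), hmapP]
  have hmapI2 : Ideal.map Φ (I ^ 2) =
      Ideal.map C ((dualIdeal K ((E.filter (fun e => e ⊆ S)).image
        (fun e => e.subtype (fun i => i ∈ S)))) ^ 2) := by
    rw [Ideal.map_pow, hmapI, ← Ideal.map_pow]
  rw [hmapI2]
  exact exists_colon_mapC_iff _ _ hP'
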